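/- Let L be a rescaled graph Laplacian with Lh = 0, ‖h‖₂ = 1, and K = L⁺ its Moore–Penrose pseudoinverse. For any non-empty index subset I with K_{I,I} invertible, Tr[(L_{I^c,I^c})⁻¹] = Tr[K] − Tr[(K²)_{I,I}(K_{I,I})⁻¹] + (1 + h_Iᵀ(K_{I,I})⁻¹(K²)_{I,I}(K_{I,I})⁻¹h_I) / (h_Iᵀ(K_{I,I})⁻¹h_I). -/

import Mathlib

open Matrix BigOperators

/-- The inclusion of a finite set of indices. -/
def incl {n : ℕ} (J : Finset (Fin n)) : {x // x ∈ J} → Fin n := fun j => j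

/-- The inclusion of the complement of a finite set of indices. -/
def inclC {n : ℕ} (J : Finset (Fin n)) : {x // x ∉ J} → Fin n := fun j => j

section Helpers

variable {n : ℕ} (J : Finset (Fin n))

lemma sum_split (F : Fin n → ℝ) :
    ∑ k, F k = (∑ k : {x // x ∈ J}, F (incl J k)) + ∑ k : {x // x ∉ J}, F (inclC J k) := by
  classical
  rw [← Finset.sum_add_sum_compl J F, Finset.sum_subtype J (fun x => Iff.rfl) F,
      Finset.sum_subtype Jᶜ (fun x => Finset.mem_compl) F]
  rfl

set_option linter.unusedSectionVars false

variable {α γ : Type*} [Fintype α] [Fintype γ]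

lemma submatrix_mul_split (A B : Matrix (Fin n) (Fin n) ℝ) (f : α → Fin n) (g : γ → Fin n) :
    (A * B).submatrix f g
      = A.submatrix f (incl J) * B.submatrix (incl J) g
        + A.submatrix f (inclC J) * B.submatrix (inclC J) g := by
  ext i j
  simp only [Matrix.submatrix_apply, Matrix.mul_apply, Matrix.add_apply]
  exact sum_split J _

lemma mulVec_split (A : Matrix (Fin n) (Fin n) ℝ) (x : Fin n → ℝ) (f : α → Fin n) :
    (fun i => (A *ᵥ x) (f i))
      = A.submatrix f (incl J) *ᵥ (x ∘ incl J) + A.submatrix f (inclC J) *ᵥ (x ∘ inclC J) := by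
  funext i
  simp only [Matrix.mulVec, dotProduct, Pi.add_apply, Matrix.submatrix_apply,
    Function.comp_apply]
  exact sum_split J _

lemma dot_split (x y : Fin n → ℝ) :
    x ⬝ᵥ y = (x ∘ incl J) ⬝ᵥ (y ∘ incl J) + (x ∘ inclC J) ⬝ᵥ (y ∘ inclC J) := by
  simp only [dotProduct, Function.comp_apply]
  exact sum_split J _

lemma trace_split (A : Matrix (Fin n) (Fin n) ℝ) :
    A.trace = (A.submatrix (incl J) (incl J)).trace + (A.submatrix (inclC J) (inclC J)).trace := by
  simp only [Matrix.trace, Matrix.diag, Matrix.submatrix_apply]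
  exact sum_split J _

lemma one_submatrix_mixed :
    (1 : Matrix (Fin n) (Fin n) ℝ).submatrix (inclC J) (incl J) = 0 := by
  ext i j
  have : inclC J i ≠ incl J j := by
    intro hh
    have h2 : (i : Fin n) = (j : Fin n) := hh
    exact i.2 (h2 ▸ j.2)
  simp [Matrix.one_apply, this]

lemma one_submatrix_inclC :
    (1 : Matrix (Fin n) (Fin n) ℝ).submatrix (inclC J) (inclC J) = 1 := by
  ext i j
  have : inclC J i = inclC J j ↔ i = j := by
    constructor
    · intro hh; exact Subtype.ext hh
    · intro hh; rw [hh]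
  simp [Matrix.one_apply, this]

end Helpers

section VecMulVec

variable {m p r : Type*} [Fintype m] [Fintype p] [Fintype r]

lemma mul_vecMulVec' (A : Matrix m p ℝ) (x : p → ℝ) (y : r → ℝ) :
    A * vecMulVec x y = vecMulVec (A *ᵥ x) y := by
  ext i j
  simp only [Matrix.mul_apply, Matrix.vecMulVec_apply, Matrix.mulVec, dotProduct,
    Finset.sum_mul]
  exact Finset.sum_congr rfl fun k _ => by ring

lemma vecMulVec_mul' (x : m → ℝ) (y : p → ℝ) (A : Matrix p r ℝ) :
    vecMulVec x y * A = vecMulVec x (Aᵀ *ᵥ y) := by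
  ext i j
  simp only [Matrix.mul_apply, Matrix.vecMulVec_apply, Matrix.mulVec, dotProduct,
    Matrix.transpose_apply, Finset.mul_sum]
  exact Finset.sum_congr rfl fun k _ => by ring

lemma vecMulVec_mulVec' (x : m → ℝ) (y : p → ℝ) (z : p → ℝ) :
    vecMulVec x y *ᵥ z = (y ⬝ᵥ z) • x := by
  funext i
  simp only [Matrix.mulVec, dotProduct, Matrix.vecMulVec_apply, Pi.smul_apply,
    smul_eq_mul, Finset.mul_sum]
  rw [Finset.sum_mul]
  exact Finset.sum_congr rfl fun k _ => by ring

lemma trace_vecMulVec' (x y : m → ℝ) : (vecMulVec x y).trace = x ⬝ᵥ y := rfl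

end VecMulVec

lemma mulVec_dot {m' : Type*} [Fintype m'] {p' : Type*} [Fintype p']
    (M : Matrix m' p' ℝ) (a : p' → ℝ) (b : m' → ℝ) :
    (M *ᵥ a) ⬝ᵥ b = a ⬝ᵥ (Mᵀ *ᵥ b) := by
  rw [Matrix.dotProduct_mulVec a Mᵀ b, Matrix.vecMul_transpose]

lemma vecMulVec_smul_left {m' p' : Type*} (c : ℝ) (x : m' → ℝ) (y : p' → ℝ) :
    vecMulVec (c • x) y = c • vecMulVec x y := by
  ext i j
  simp [Matrix.vecMulVec_apply, mul_assoc]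

lemma vecMulVec_sub_right {m' p' : Type*} (x : m' → ℝ) (y z : p' → ℝ) :
    vecMulVec x (y - z) = vecMulVec x y - vecMulVec x z := by
  ext i j
  simp [Matrix.vecMulVec_apply, mul_sub]

lemma aux_block {p q : Type*} [Fintype p] [Fintype q] [DecidableEq p] [DecidableEq q]
    (X Y : Matrix p p ℝ) (Bm : Matrix p q ℝ) (Cm : Matrix q p ℝ) (Em : Matrix q q ℝ)
    (Gm : Matrix q p ℝ) (Dm : Matrix q q ℝ) (v : p → ℝ) (u : q → ℝ)
    (hXinv : IsUnit X.det) (hXsym : Xᵀ = X) (hBC : Bmᵀ = Cm)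
    (hGX : Gm * X + Dm * Cm = -(vecMulVec u v))
    (hGB : Gm * Bm + Dm * Em = 1 - vecMulVec u u)
    (hDu : Gm *ᵥ v + Dm *ᵥ u = 0)
    (hBu : X *ᵥ v + Bm *ᵥ u = 0)
    (hY : Y = X * X + Bm * Cm)
    (hb : v ⬝ᵥ (X⁻¹ *ᵥ v) ≠ 0)
    (huv : u ⬝ᵥ u + v ⬝ᵥ v = 1) :
    (Dm⁻¹).trace = Em.trace + X.trace - (Y * X⁻¹).trace
      + (1 + v ⬝ᵥ ((X⁻¹ * Y * X⁻¹) *ᵥ v)) / (v ⬝ᵥ (X⁻¹ *ᵥ v)) := by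
  have hX1 : X * X⁻¹ = 1 := Matrix.mul_nonsing_inv _ hXinv
  have hX2 : X⁻¹ * X = 1 := Matrix.nonsing_inv_mul _ hXinv
  have hXisym : (X⁻¹)ᵀ = X⁻¹ := by rw [Matrix.transpose_nonsing_inv, hXsym]
  have hCB : Cmᵀ = Bm := by rw [← hBC, Matrix.transpose_transpose]
  set w : p → ℝ := X⁻¹ *ᵥ v with hwdef
  set β : ℝ := v ⬝ᵥ w with hbdef
  have hXw : X *ᵥ w = v := by
    rw [hwdef, Matrix.mulVec_mulVec, hX1, Matrix.one_mulVec]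
  set z : q → ℝ := u - Cm *ᵥ w with hzdef
  set Z : Matrix q q ℝ := Em - Cm * X⁻¹ * Bm + (β⁻¹) • vecMulVec z z with hZdef
  have hDu' : Dm *ᵥ u = -(Gm *ᵥ v) := by
    have h' := hDu; rw [add_comm] at h'; exact eq_neg_of_add_eq_zero_left h'
  have hBu' : Bm *ᵥ u = -(X *ᵥ v) := by
    have h' := hBu; rw [add_comm] at h'; exact eq_neg_of_add_eq_zero_left h'
  have hDC : Dm * Cm = -(vecMulVec u v) - Gm * X := by rw [← hGX]; abel
  have hDE : Dm * Em = 1 - vecMulVec u u - Gm * Bm := by rw [← hGB]; abel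
  have hBmCm : Bm * Cm = Y - X * X := by rw [hY]; abel
  have hDz : Dm *ᵥ z = β • u := by
    rw [hzdef, Matrix.mulVec_sub, hDu', Matrix.mulVec_mulVec, hDC, Matrix.sub_mulVec,
      Matrix.neg_mulVec, vecMulVec_mulVec', ← Matrix.mulVec_mulVec, hXw, ← hbdef]
    abel
  have hDZ : Dm * Z = 1 := by
    have e4 : Dm * (Cm * X⁻¹ * Bm) = -(vecMulVec u (Cm *ᵥ w)) - Gm * Bm := by
      rw [Matrix.mul_assoc Cm, ← Matrix.mul_assoc Dm, hDC, Matrix.sub_mul, Matrix.neg_mul,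
        vecMulVec_mul', Matrix.transpose_mul, hXisym, hBC, ← Matrix.mulVec_mulVec, ← hwdef,
        Matrix.mul_assoc Gm, ← Matrix.mul_assoc X, hX1, Matrix.one_mul]
    have e5 : Dm * ((β⁻¹) • vecMulVec z z) = vecMulVec u z := by
      rw [Matrix.mul_smul, mul_vecMulVec', hDz, vecMulVec_smul_left, smul_smul,
        inv_mul_cancel₀ hb, one_smul]
    rw [hZdef, Matrix.mul_add, Matrix.mul_sub, hDE, e4, e5, hzdef, vecMulVec_sub_right]
    abel
  have hDinv : Dm⁻¹ = Z := Matrix.inv_eq_right_inv hDZ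
  have tCXB : (Cm * X⁻¹ * Bm).trace = (Y * X⁻¹).trace - X.trace := by
    rw [Matrix.trace_mul_comm, ← Matrix.mul_assoc, hBmCm, Matrix.sub_mul, Matrix.trace_sub,
      Matrix.mul_assoc, hX1, Matrix.mul_one]
  have hγ : (X⁻¹ * Y * X⁻¹) *ᵥ v = X⁻¹ *ᵥ (Y *ᵥ w) := by
    rw [← Matrix.mulVec_mulVec, ← Matrix.mulVec_mulVec, ← hwdef]
  set γ : ℝ := v ⬝ᵥ ((X⁻¹ * Y * X⁻¹) *ᵥ v) with hgdef
  have hum : u ⬝ᵥ (Cm *ᵥ w) = -(v ⬝ᵥ v) := by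
    rw [Matrix.dotProduct_mulVec u Cm w, ← Matrix.mulVec_transpose Cm u, hCB, hBu',
      neg_dotProduct, mulVec_dot, hXsym, hXw]
  have hm3 : (Cm *ᵥ w) ⬝ᵥ u = -(v ⬝ᵥ v) := by rw [dotProduct_comm]; exact hum
  have t1 : w ⬝ᵥ (Y *ᵥ w) = γ := by
    nth_rewrite 1 [hwdef]
    rw [mulVec_dot X⁻¹ v (Y *ᵥ w), hXisym, hgdef, hγ]
  have t2 : w ⬝ᵥ ((X * X) *ᵥ w) = v ⬝ᵥ v := by
    rw [← Matrix.mulVec_mulVec, hXw]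
    nth_rewrite 1 [hwdef]
    rw [mulVec_dot X⁻¹ v (X *ᵥ v), hXisym, Matrix.mulVec_mulVec, hX2, Matrix.one_mulVec]
  have hm2 : (Cm *ᵥ w) ⬝ᵥ (Cm *ᵥ w) = γ - v ⬝ᵥ v := by
    rw [mulVec_dot Cm w (Cm *ᵥ w), hCB, Matrix.mulVec_mulVec, hBmCm, Matrix.sub_mulVec,
      dotProduct_sub, t1, t2]
  have hzz : z ⬝ᵥ z = 1 + γ := by
    rw [hzdef, sub_dotProduct, dotProduct_sub, dotProduct_sub, hum, hm3,
      hm2]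
    linarith
  rw [hDinv, hZdef, Matrix.trace_add, Matrix.trace_sub, Matrix.trace_smul, trace_vecMulVec',
    tCXB, hzz, smul_eq_mul, div_eq_inv_mul]
  ring

theorem stmt_4 (n : ℕ) (L K : Matrix (Fin n) (Fin n) ℝ) (h : Fin n → ℝ)
    (hL : L.PosSemidef) (hLh : L *ᵥ h = 0) (hnorm : ∑ i, h i ^ 2 = 1)
    (hpos : ∀ i, 0 < h i)
    (hker : ∀ x : Fin n → ℝ, L *ᵥ x = 0 → ∃ c : ℝ, x = c • h)
    (pen1 : L * K * L = L) (pen2 : K * L * K = K)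
    (pen3 : (L * K)ᵀ = L * K) (pen4 : (K * L)ᵀ = K * L)
    (I : Finset (Fin n)) (hI : I.Nonempty)
    (hKI : IsUnit (K.submatrix (incl I) (incl I)).det) :
    (let KII := K.submatrix (incl I) (incl I)
     let K2II := (K * K).submatrix (incl I) (incl I)
     let hI : {x // x ∈ I} → ℝ := fun i => h i
     ((L.submatrix (inclC I) (inclC I))⁻¹).trace
       = K.trace - (K2II * KII⁻¹).trace
         + (1 + hI ⬝ᵥ ((KII⁻¹ * K2II * KII⁻¹) *ᵥ hI)) / (hI ⬝ᵥ (KII⁻¹ *ᵥ hI))) := by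
  classical
  have hLsym : Lᵀ = L := by
    have h1 : Lᴴ = L := hL.1
    rwa [Matrix.conjTranspose_eq_transpose_of_trivial] at h1
  have hdot : h ⬝ᵥ h = 1 := by
    simpa [dotProduct, pow_two] using hnorm
  set H := vecMulVec h h with hHdef
  have hHsym : Hᵀ = H := by
    ext i j; simp [hHdef, Matrix.vecMulVec_apply, mul_comm]
  have vmv_zero_right : ∀ (x : Fin n → ℝ), vecMulVec x (0 : Fin n → ℝ) = 0 := by
    intro x; ext i j; simp [Matrix.vecMulVec_apply]
  have vmv_zero_left : ∀ (x : Fin n → ℝ), vecMulVec (0 : Fin n → ℝ) x = 0 := by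
    intro x; ext i j; simp [Matrix.vecMulVec_apply]
  have hHL : H * L = 0 := by
    rw [hHdef, vecMulVec_mul', hLsym, hLh, vmv_zero_right]
  have hLH : L * H = 0 := by
    rw [hHdef, mul_vecMulVec', hLh, vmv_zero_left]
  have hLsym' : ∀ a b, L a b = L b a := fun a b =>
    (congrFun (congrFun hLsym a) b).symm.trans (Matrix.transpose_apply L a b)
  -- a matrix annihilated by L on the right and by h is zero
  have rows_ker : ∀ Q : Matrix (Fin n) (Fin n) ℝ, Q * L = 0 → Q *ᵥ h = 0 → Q = 0 := by
    intro Q hQL hQh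
    ext j k
    have hcol : L *ᵥ (fun m => Q j m) = 0 := by
      funext i
      have h0 : (Q * L) j i = 0 := by rw [hQL]; rfl
      rw [Matrix.mul_apply] at h0
      show ∑ m, L i m * Q j m = 0
      rw [← h0]
      exact Finset.sum_congr rfl fun m _ => by rw [hLsym' i m]; ring
    obtain ⟨c, hc⟩ := hker _ hcol
    have hcm : ∀ m, Q j m = c * h m := by
      intro m
      have := congrFun hc m
      simpa using this
    have hcval : (Q *ᵥ h) j = c := by
      show ∑ m, Q j m * h m = c
      calc ∑ m, Q j m * h m = ∑ m, c * (h m ^ 2) := by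
            exact Finset.sum_congr rfl fun m _ => by rw [hcm m]; ring
        _ = c := by rw [← Finset.mul_sum, hnorm, mul_one]
    have hc0 : c = 0 := by rw [← hcval, hQh]; rfl
    show Q j k = 0
    rw [hcm k, hc0, zero_mul]
  -- L * K = Kᵀ * L
  have hLKt : L * K = Kᵀ * L := by
    conv_lhs => rw [← pen3]
    rw [Matrix.transpose_mul, hLsym]
  have hKh : K *ᵥ h = 0 := by
    have hK1 : K = K * Kᵀ * L := by
      conv_lhs => rw [← pen2, Matrix.mul_assoc, hLKt, ← Matrix.mul_assoc]
    rw [hK1, ← Matrix.mulVec_mulVec, hLh, Matrix.mulVec_zero]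
  have hKth : Kᵀ *ᵥ h = 0 := by
    have hK2 : Kᵀ = Kᵀ * K * L := by
      conv_lhs => rw [← pen2]
      rw [Matrix.transpose_mul, pen4, ← Matrix.mul_assoc]
    rw [hK2, ← Matrix.mulVec_mulVec, hLh, Matrix.mulVec_zero]
  -- L * K = 1 - H
  have hLK : L * K = 1 - H := by
    have hQL : (1 - H - L * K) * L = 0 := by
      rw [Matrix.sub_mul, Matrix.sub_mul, Matrix.one_mul, hHL, Matrix.mul_assoc, ← Matrix.mul_assoc, pen1]
      simp
    have hQh : (1 - H - L * K) *ᵥ h = 0 := by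
      rw [Matrix.sub_mulVec, Matrix.sub_mulVec, Matrix.one_mulVec, hHdef, vecMulVec_mulVec',
        hdot, one_smul, ← Matrix.mulVec_mulVec, hKh, Matrix.mulVec_zero]
      simp
    have := rows_ker _ hQL hQh
    exact (sub_eq_zero.mp this).symm
  -- K * L = 1 - H
  have hKL : K * L = 1 - H := by
    have hQsym : (1 - H - K * L)ᵀ = 1 - H - K * L := by
      rw [Matrix.transpose_sub, Matrix.transpose_sub, Matrix.transpose_one, hHsym, pen4]
    have h1 : L * (1 - H - K * L) = 0 := by
      rw [Matrix.mul_sub, Matrix.mul_sub, Matrix.mul_one, hLH, ← Matrix.mul_assoc, pen1]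
      simp
    have hQL : (1 - H - K * L) * L = 0 := by
      have := congrArg Matrix.transpose h1
      rwa [Matrix.transpose_mul, hQsym, hLsym, Matrix.transpose_zero] at this
    have hQh : (1 - H - K * L) *ᵥ h = 0 := by
      rw [Matrix.sub_mulVec, Matrix.sub_mulVec, Matrix.one_mulVec, hHdef, vecMulVec_mulVec',
        hdot, one_smul, ← Matrix.mulVec_mulVec, hLh, Matrix.mulVec_zero]
      simp
    have := rows_ker _ hQL hQh
    exact (sub_eq_zero.mp this).symm
  -- K is symmetric
  have hKsym : Kᵀ = K := by
    have e1 : L * K + H = 1 := by rw [hLK]; abel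
    have hKH : Kᵀ * H = 0 := by
      rw [hHdef, mul_vecMulVec', hKth, vmv_zero_left]
    have hHK : H * K = 0 := by
      rw [hHdef, vecMulVec_mul', hKth, vmv_zero_right]
    calc Kᵀ = Kᵀ * (L * K + H) := by rw [e1, Matrix.mul_one]
      _ = (Kᵀ * L) * K + Kᵀ * H := by rw [Matrix.mul_add, Matrix.mul_assoc]
      _ = (L * K) * K := by rw [← hLKt, hKH, add_zero]
      _ = (1 - H) * K := by rw [hLK]
      _ = K := by rw [Matrix.sub_mul, Matrix.one_mul, hHK, sub_zero]
  -- K is positive semidefinite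
  have hKpsd : K.PosSemidef := by
    refine Matrix.posSemidef_iff_dotProduct_mulVec.mpr ⟨?_, ?_⟩
    · show Kᴴ = K
      rw [Matrix.conjTranspose_eq_transpose_of_trivial]
      exact hKsym
    · intro x
      have hsx : star x = x := by funext i; simp
      have e1 : x ⬝ᵥ K *ᵥ x = (K *ᵥ x) ⬝ᵥ L *ᵥ (K *ᵥ x) := by
        conv_lhs => rw [← pen2, ← Matrix.mulVec_mulVec, ← Matrix.mulVec_mulVec]
        rw [Matrix.dotProduct_mulVec x K, ← Matrix.mulVec_transpose, hKsym]
      rw [hsx, e1]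
      have h2 := hL.dotProduct_mulVec_nonneg (K *ᵥ x)
      rwa [show star (K *ᵥ x) = K *ᵥ x by funext i; simp] at h2
  -- instantiate the abstract block lemma
  show ((L.submatrix (inclC I) (inclC I))⁻¹).trace
      = K.trace - ((K * K).submatrix (incl I) (incl I) * (K.submatrix (incl I) (incl I))⁻¹).trace
        + (1 + (fun i : {x // x ∈ I} => h ↑i) ⬝ᵥ
              (((K.submatrix (incl I) (incl I))⁻¹ * (K * K).submatrix (incl I) (incl I) *
                  (K.submatrix (incl I) (incl I))⁻¹) *ᵥ (fun i : {x // x ∈ I} => h ↑i)))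
          / ((fun i : {x // x ∈ I} => h ↑i) ⬝ᵥ
              ((K.submatrix (incl I) (incl I))⁻¹ *ᵥ (fun i : {x // x ∈ I} => h ↑i)))
  set X := K.submatrix (incl I) (incl I) with hXdef
  set Y := (K * K).submatrix (incl I) (incl I) with hYdef
  set Bm := K.submatrix (incl I) (inclC I) with hBmdef
  set Cm := K.submatrix (inclC I) (incl I) with hCmdef
  set Em := K.submatrix (inclC I) (inclC I) with hEmdef
  set Gm := L.submatrix (inclC I) (incl I) with hGmdef
  set Dm := L.submatrix (inclC I) (inclC I) with hDmdef
  set v : {x // x ∈ I} → ℝ := fun i => h ↑i with hvdef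
  set u : {x // x ∉ I} → ℝ := fun i => h ↑i with hudef
  have hXsym : Xᵀ = X := by rw [hXdef, Matrix.transpose_submatrix, hKsym]
  have hBC : Bmᵀ = Cm := by rw [hBmdef, hCmdef, Matrix.transpose_submatrix, hKsym]
  have hsub1 : (1 - H).submatrix (inclC I) (incl I) = -(vecMulVec u v) := by
    ext i j
    have hij : ¬ ((i : Fin n) = (j : Fin n)) := fun hh => i.2 (hh ▸ j.2)
    simp [Matrix.one_apply, hij, hHdef, Matrix.vecMulVec_apply, hudef, hvdef, incl, inclC]
  have hsub2 : (1 - H).submatrix (inclC I) (inclC I) = 1 - vecMulVec u u := by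
    have h1 : (1 - H).submatrix (inclC I) (inclC I)
        = (1 : Matrix (Fin n) (Fin n) ℝ).submatrix (inclC I) (inclC I)
          - H.submatrix (inclC I) (inclC I) := rfl
    rw [h1, one_submatrix_inclC]
    have h2 : H.submatrix (inclC I) (inclC I) = vecMulVec u u := by
      ext i j
      simp [hHdef, Matrix.vecMulVec_apply, hudef, inclC]
    rw [h2]
  have hGX : Gm * X + Dm * Cm = -(vecMulVec u v) :=
    (submatrix_mul_split I L K (inclC I) (incl I)).symm.trans (by rw [hLK]; exact hsub1)
  have hGB : Gm * Bm + Dm * Em = 1 - vecMulVec u u :=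
    (submatrix_mul_split I L K (inclC I) (inclC I)).symm.trans (by rw [hLK]; exact hsub2)
  have hDu : Gm *ᵥ v + Dm *ᵥ u = 0 := by
    have h1 := (mulVec_split I L h (inclC I)).symm
    rw [hLh] at h1
    exact h1.trans rfl
  have hBu : X *ᵥ v + Bm *ᵥ u = 0 := by
    have h1 := (mulVec_split I K h (incl I)).symm
    rw [hKh] at h1
    exact h1.trans rfl
  have hY : Y = X * X + Bm * Cm := submatrix_mul_split I K K (incl I) (incl I)
  have huv : u ⬝ᵥ u + v ⬝ᵥ v = 1 := by
    have h1 := (dot_split I h h).symm.trans hdot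
    rw [add_comm] at h1
    exact h1
  have hb : v ⬝ᵥ (X⁻¹ *ᵥ v) ≠ 0 := by
    set w : {x // x ∈ I} → ℝ := X⁻¹ *ᵥ v with hwdef
    set wt : Fin n → ℝ := fun k => if hk : k ∈ I then w ⟨k, hk⟩ else 0 with hwtdef
    have hwι : wt ∘ incl I = w := by
      funext i
      simp only [Function.comp_apply, hwtdef, incl]
      exact dif_pos i.2
    have hwι' : wt ∘ inclC I = 0 := by
      funext i
      simp only [Function.comp_apply, hwtdef, inclC, Pi.zero_apply]
      exact dif_neg i.2
    have hKwt' : (K *ᵥ wt) ∘ incl I = v := by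
      have h1 : (fun i : {x // x ∈ I} => (K *ᵥ wt) (incl I i))
          = X *ᵥ (wt ∘ incl I) + Bm *ᵥ (wt ∘ inclC I) := mulVec_split I K wt (incl I)
      show (fun i : {x // x ∈ I} => (K *ᵥ wt) (incl I i)) = v
      rw [h1, hwι, hwι', Matrix.mulVec_zero, add_zero, hwdef, Matrix.mulVec_mulVec,
        Matrix.mul_nonsing_inv _ hKI, Matrix.one_mulVec]
    have hquad : wt ⬝ᵥ (K *ᵥ wt) = v ⬝ᵥ w := by
      rw [dot_split I wt (K *ᵥ wt), hwι, hwι', hKwt', zero_dotProduct, add_zero,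
        dotProduct_comm]
    have hstar : star wt = wt := by funext i; simp
    intro h0
    have hzero : K *ᵥ wt = 0 := by
      refine (hKpsd.dotProduct_mulVec_zero_iff wt).mp ?_
      rw [hstar, hquad]
      exact h0
    have hv0 : v = 0 := by
      rw [← hKwt', hzero]
      funext i
      simp
    obtain ⟨i0, hi0⟩ := hI
    have h2 := congrFun hv0 ⟨i0, hi0⟩
    simp only [hvdef, Pi.zero_apply] at h2
    exact (hpos i0).ne' h2
  have E1 := aux_block X Y Bm Cm Em Gm Dm v u hKI hXsym hBC hGX hGB hDu hBu hY hb huv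
  rw [E1, trace_split I K]
  rw [← hXdef, ← hEmdef]
  ring
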